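/- Let E be a Hausdorff topological space equipped with its Borel σ-algebra, and let (p_t)_{t>0} be a Markov semigroup of probability transition kernels on E that is irreducible and strong Feller. If μ is an invariant probability measure for (p_t), then μ is equivalent (mutually absolutely continuous) to the measure p_t(x,·) for every t>0 and every x∈E, and moreover for every x∈E and every Borel set A, p_t(x,A) → μ(A) as t → ∞. -/

import Mathlib

open MeasureTheory Filter
open Set
open scoped ENNReal

set_option linter.unusedSectionVars false
set_option maxHeartbeats 2000000

section DoobHelper

variable {α : Type*} [MeasurableSpace α]

/-- If all sets of a sequence have measure at least `θ > 0`, some point lies in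
infinitely many of them. -/
lemma doob_exists_mem_infinitely_often (μ : Measure α) [IsProbabilityMeasure μ]
    {A : ℕ → Set α} (hA : ∀ n, MeasurableSet (A n)) {θ : ℝ≥0∞} (hθ : 0 < θ)
    (h : ∀ n, θ ≤ μ (A n)) : ∃ y, {n : ℕ | y ∈ A n}.Infinite := by
  set S : ℕ → Set α := fun K => ⋃ (n) (_ : K ≤ n), A n with hSdef
  have hSm : ∀ K, MeasurableSet (S K) := fun K =>
    MeasurableSet.iUnion (fun n => MeasurableSet.iUnion (fun _ => hA n))
  have hSanti : Antitone S := by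
    intro K L hKL x hx
    rw [Set.mem_iUnion] at hx
    obtain ⟨n, hn⟩ := hx
    rw [Set.mem_iUnion] at hn
    obtain ⟨hLn, hxn⟩ := hn
    exact Set.mem_iUnion.2 ⟨n, Set.mem_iUnion.2 ⟨le_trans hKL hLn, hxn⟩⟩
  have htend : Tendsto (μ ∘ S) atTop (nhds (μ (⋂ K, S K))) := by
    apply tendsto_measure_iInter_atTop (fun K => (hSm K).nullMeasurableSet) hSanti
    exact ⟨0, (measure_lt_top μ _).ne⟩
  have hlb : θ ≤ μ (⋂ K, S K) := by
    apply ge_of_tendsto htend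
    filter_upwards with K
    exact le_trans (h K) (measure_mono (fun x hx => Set.mem_iUnion.2 ⟨K, Set.mem_iUnion.2 ⟨le_refl K, hx⟩⟩))
  have hne : (⋂ K, S K).Nonempty := by
    rw [Set.nonempty_iff_ne_empty]
    intro hempty
    rw [hempty, measure_empty] at hlb
    exact hθ.ne' (le_antisymm hlb zero_le)
  obtain ⟨y, hy⟩ := hne
  refine ⟨y, ?_⟩
  intro hfin
  obtain ⟨B, hB⟩ := hfin.bddAbove
  have := Set.mem_iInter.1 hy (B + 1)
  rw [Set.mem_iUnion] at this
  obtain ⟨n, hn⟩ := this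
  rw [Set.mem_iUnion] at hn
  obtain ⟨hBn, hyn⟩ := hn
  have : n ≤ B := hB hyn
  omega


end DoobHelper

section DoobAux


variable {E : Type*} [TopologicalSpace E] [T2Space E] [MeasurableSpace E] [BorelSpace E]

lemma doob_mu_open_pos (p : ℝ → E → Measure E) (μ : Measure E) [IsProbabilityMeasure μ]
    (hmeas : ∀ t > (0 : ℝ), ∀ A : Set E, MeasurableSet A → Measurable (fun x => p t x A))
    (hirr : ∀ t > (0 : ℝ), ∀ x : E, ∀ U : Set E, IsOpen U → U.Nonempty → 0 < p t x U)
    (hinv : ∀ t > (0 : ℝ), ∀ A : Set E, MeasurableSet A → ∫⁻ x, p t x A ∂μ = μ A)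
    {U : Set E} (hU : IsOpen U) (hne : U.Nonempty) : 0 < μ U := by
  rw [pos_iff_ne_zero]
  intro h0
  have h1 : ∫⁻ x, p 1 x U ∂μ = 0 := by
    rw [hinv 1 one_pos U hU.measurableSet, h0]
  rw [lintegral_eq_zero_iff (hmeas 1 one_pos U hU.measurableSet)] at h1
  have h2 : μ {x : E | ¬ p 1 x U = 0} = 0 := by
    have := h1
    rw [Filter.EventuallyEq, ae_iff] at this
    simpa using this
  have h3 : {x : E | ¬ p 1 x U = 0} = univ := by
    ext x
    simp only [mem_setOf_eq, mem_univ, iff_true]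
    exact (hirr 1 one_pos x U hU hne).ne'
  rw [h3, measure_univ] at h2
  exact one_ne_zero h2

/-- If `μ A = 0` then `p t y A = 0` for every `y` (so `p t y ≪ μ`). -/
lemma doob_null (p : ℝ → E → Measure E) (μ : Measure E) [IsProbabilityMeasure μ]
    (hprob : ∀ t > (0 : ℝ), ∀ x : E, IsProbabilityMeasure (p t x))
    (hmeas : ∀ t > (0 : ℝ), ∀ A : Set E, MeasurableSet A → Measurable (fun x => p t x A))
    (hCK : ∀ s > (0 : ℝ), ∀ t > (0 : ℝ), ∀ (x : E) (A : Set E), MeasurableSet A →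
      p (t + s) x A = ∫⁻ y, p s y A ∂(p t x))
    (hirr : ∀ t > (0 : ℝ), ∀ x : E, ∀ U : Set E, IsOpen U → U.Nonempty → 0 < p t x U)
    (hSF : ∀ t > (0 : ℝ), ∀ A : Set E, MeasurableSet A → Continuous (fun x => p t x A))
    (hinv : ∀ t > (0 : ℝ), ∀ A : Set E, MeasurableSet A → ∫⁻ x, p t x A ∂μ = μ A)
    {t : ℝ} (ht : 0 < t) {A : Set E} (hA : MeasurableSet A) (h0 : μ A = 0) :
    ∀ y : E, p t y A = 0 := by
  have ht2 : 0 < t / 2 := by linarith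
  -- first: the half-time kernel vanishes everywhere on A
  have hhalf : ∀ y : E, p (t/2) y A = 0 := by
    have h1 : ∫⁻ x, p (t/2) x A ∂μ = 0 := by rw [hinv _ ht2 A hA, h0]
    rw [lintegral_eq_zero_iff (hmeas _ ht2 A hA)] at h1
    have h2 : μ {x : E | ¬ p (t/2) x A = 0} = 0 := by
      have := h1
      rw [Filter.EventuallyEq, ae_iff] at this
      simpa using this
    by_contra hcon
    push_neg at hcon
    obtain ⟨y₀, hy₀⟩ := hcon
    have hq : 0 < p (t/2) y₀ A := pos_iff_ne_zero.2 hy₀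
    set q := p (t/2) y₀ A with hqdef
    have hqtop : q ≠ ⊤ := by
      haveI := hprob (t/2) ht2 y₀
      exact (measure_lt_top _ _).ne
    have hhalflt : q / 2 < q := ENNReal.half_lt_self hy₀ hqtop
    set V : Set E := {y : E | q / 2 < p (t/2) y A} with hVdef
    have hVopen : IsOpen V := by
      have : V = (fun y => p (t/2) y A) ⁻¹' (Ioi (q/2)) := rfl
      rw [this]
      exact (hSF _ ht2 A hA).isOpen_preimage _ isOpen_Ioi
    have hVne : V.Nonempty := ⟨y₀, hhalflt⟩
    have hVpos : 0 < μ V := doob_mu_open_pos p μ hmeas hirr hinv hVopen hVne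
    have hVnull : μ V ≤ μ {x : E | ¬ p (t/2) x A = 0} := by
      apply measure_mono
      intro x hx
      have : 0 < p (t/2) x A := lt_of_le_of_lt zero_le hx
      exact this.ne'
    rw [h2] at hVnull
    exact absurd (le_antisymm hVnull zero_le) hVpos.ne'
  intro y
  have hck := hCK (t/2) ht2 (t/2) ht2 y A hA
  have htt : t/2 + t/2 = t := by ring
  rw [htt] at hck
  rw [hck]
  rw [lintegral_congr (fun z => hhalf z)]
  simp

/-- If `μ A > 0` then `p t y A > 0` for every `y` (so `μ ≪ p t y`). -/
lemma doob_pos (p : ℝ → E → Measure E) (μ : Measure E) [IsProbabilityMeasure μ]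
    (hprob : ∀ t > (0 : ℝ), ∀ x : E, IsProbabilityMeasure (p t x))
    (hmeas : ∀ t > (0 : ℝ), ∀ A : Set E, MeasurableSet A → Measurable (fun x => p t x A))
    (hCK : ∀ s > (0 : ℝ), ∀ t > (0 : ℝ), ∀ (x : E) (A : Set E), MeasurableSet A →
      p (t + s) x A = ∫⁻ y, p s y A ∂(p t x))
    (hirr : ∀ t > (0 : ℝ), ∀ x : E, ∀ U : Set E, IsOpen U → U.Nonempty → 0 < p t x U)
    (hSF : ∀ t > (0 : ℝ), ∀ A : Set E, MeasurableSet A → Continuous (fun x => p t x A))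
    (hinv : ∀ t > (0 : ℝ), ∀ A : Set E, MeasurableSet A → ∫⁻ x, p t x A ∂μ = μ A)
    {t : ℝ} (ht : 0 < t) {A : Set E} (hA : MeasurableSet A) (h0 : μ A ≠ 0) :
    ∀ y : E, 0 < p t y A := by
  have ht2 : 0 < t / 2 := by linarith
  have hex : ∃ y₀ : E, p (t/2) y₀ A ≠ 0 := by
    by_contra hcon
    push_neg at hcon
    have h1 : ∫⁻ x, p (t/2) x A ∂μ = 0 := by
      rw [lintegral_congr (fun z => hcon z)]; simp
    rw [hinv _ ht2 A hA] at h1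
    exact h0 h1
  obtain ⟨y₀, hy₀⟩ := hex
  set q := p (t/2) y₀ A with hqdef
  have hqtop : q ≠ ⊤ := by
    haveI := hprob (t/2) ht2 y₀
    exact (measure_lt_top _ _).ne
  have hhalflt : q / 2 < q := ENNReal.half_lt_self hy₀ hqtop
  set V : Set E := {y : E | q / 2 < p (t/2) y A} with hVdef
  have hVopen : IsOpen V := by
    have : V = (fun y => p (t/2) y A) ⁻¹' (Ioi (q/2)) := rfl
    rw [this]
    exact (hSF _ ht2 A hA).isOpen_preimage _ isOpen_Ioi
  have hVne : V.Nonempty := ⟨y₀, hhalflt⟩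
  intro y
  have hck := hCK (t/2) ht2 (t/2) ht2 y A hA
  have htt : t/2 + t/2 = t := by ring
  rw [htt] at hck
  rw [hck]
  have hVm : MeasurableSet V := hVopen.measurableSet
  have hlow : q / 2 * p (t/2) y V ≤ ∫⁻ z, p (t/2) z A ∂(p (t/2) y) := by
    calc q / 2 * p (t/2) y V = ∫⁻ _ in V, q / 2 ∂(p (t/2) y) := by
          rw [setLIntegral_const, mul_comm]
      _ ≤ ∫⁻ z in V, p (t/2) z A ∂(p (t/2) y) := by
          apply setLIntegral_mono (hmeas _ ht2 A hA)
          intro z hz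
          exact le_of_lt hz
      _ ≤ ∫⁻ z, p (t/2) z A ∂(p (t/2) y) := setLIntegral_le_lintegral _ _
  have hq2pos : 0 < q / 2 := by
    apply ENNReal.div_pos hy₀
    norm_num
  have hVp : 0 < p (t/2) y V := hirr _ ht2 y V hVopen hVne
  calc (0 : ℝ≥0∞) < q / 2 * p (t/2) y V := ENNReal.mul_pos hq2pos.ne' hVp.ne'
    _ ≤ ∫⁻ z, p (t/2) z A ∂(p (t/2) y) := hlow

/-- The uniform non-singularity lemma. -/
lemma doob_lemmaR (p : ℝ → E → Measure E) (μ : Measure E) [IsProbabilityMeasure μ]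
    (hprob : ∀ t > (0 : ℝ), ∀ x : E, IsProbabilityMeasure (p t x))
    (hmeas : ∀ t > (0 : ℝ), ∀ A : Set E, MeasurableSet A → Measurable (fun x => p t x A))
    (hpos : ∀ (A : Set E), MeasurableSet A → μ A ≠ 0 → ∀ y : E, 0 < p 1 y A)
    (θ₁ θ₂ : ℝ≥0∞) (h1 : 0 < θ₁) (h2 : 0 < θ₂) :
    ∃ τ : ℝ≥0∞, 0 < τ ∧ ∀ C : Set E, MeasurableSet C →
      μ {y | p 1 y C < τ} < θ₁ ∨ μ {y | p 1 y Cᶜ < τ} < θ₂ := by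
  by_contra hcon
  push_neg at hcon
  have hsel : ∀ n : ℕ, ∃ C : Set E, MeasurableSet C ∧
      θ₁ ≤ μ {y | p 1 y C < ((n : ℝ≥0∞) + 1)⁻¹} ∧
      θ₂ ≤ μ {y | p 1 y Cᶜ < ((n : ℝ≥0∞) + 1)⁻¹} := by
    intro n
    have hτpos : 0 < ((n : ℝ≥0∞) + 1)⁻¹ := by
      apply ENNReal.inv_pos.2
      exact (ENNReal.add_lt_top.2 ⟨ENNReal.natCast_lt_top n, ENNReal.one_lt_top⟩).ne
    exact hcon _ hτpos
  choose C hCm hC1 hC2 using hsel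
  set τ : ℕ → ℝ≥0∞ := fun n => ((n : ℝ≥0∞) + 1)⁻¹ with hτdef
  set Y : ℕ → Set E := fun n => {y | p 1 y (C n) < τ n} with hYdef
  set Z : ℕ → Set E := fun n => {y | p 1 y (C n)ᶜ < τ n} with hZdef
  have hYm : ∀ n, MeasurableSet (Y n) := fun n =>
    measurableSet_lt (hmeas 1 one_pos _ (hCm n)) measurable_const
  have hZm : ∀ n, MeasurableSet (Z n) := fun n =>
    measurableSet_lt (hmeas 1 one_pos _ (hCm n).compl) measurable_const
  obtain ⟨y₀, hI1⟩ := doob_exists_mem_infinitely_often μ hYm h1 hC1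
  set e : ℕ → ℕ := Nat.nth (fun n => y₀ ∈ Y n) with hedef
  have he_strict : StrictMono e := Nat.nth_strictMono hI1
  have he_mem : ∀ k, y₀ ∈ Y (e k) := fun k => Nat.nth_mem_of_infinite hI1 k
  obtain ⟨z₀, hI2⟩ := doob_exists_mem_infinitely_often μ (fun k => hZm (e k)) h2
      (fun k => hC2 (e k))
  set e₂ : ℕ → ℕ := Nat.nth (fun k => z₀ ∈ Z (e k)) with he2def
  have he2_strict : StrictMono e₂ := Nat.nth_strictMono hI2
  have he2_mem : ∀ k, z₀ ∈ Z (e (e₂ k)) := fun k => Nat.nth_mem_of_infinite hI2 k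
  set m : ℕ → ℕ := fun j => e (e₂ (2 ^ j)) with hmdef
  have hm_ge : ∀ j, 2 ^ j ≤ m j := fun j =>
    le_trans he2_strict.le_apply he_strict.le_apply
  have hy : ∀ j, p 1 y₀ (C (m j)) < τ (m j) := fun j => he_mem (e₂ (2 ^ j))
  have hz : ∀ j, p 1 z₀ (C (m j))ᶜ < τ (m j) := fun j => he2_mem (2 ^ j)
  have hτle : ∀ j, τ (m j) ≤ ((2 : ℝ≥0∞) ^ j)⁻¹ := by
    intro j
    rw [ENNReal.inv_le_inv]
    calc (2 : ℝ≥0∞) ^ j = ((2 ^ j : ℕ) : ℝ≥0∞) := by push_cast; ring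
      _ ≤ ((m j : ℕ) : ℝ≥0∞) := by exact_mod_cast hm_ge j
      _ ≤ (m j : ℝ≥0∞) + 1 := le_self_add
  set B : Set E := ⋂ K, ⋃ (j) (_ : K ≤ j), C (m j) with hBdef
  have hBm : MeasurableSet B :=
    MeasurableSet.iInter fun K => MeasurableSet.iUnion fun j =>
      MeasurableSet.iUnion fun _ => hCm (m j)
  -- p 1 y₀ B = 0
  have hyB : p 1 y₀ B = 0 := by
    have hb : ∀ K : ℕ, p 1 y₀ B ≤ 2 * ((2 : ℝ≥0∞) ^ K)⁻¹ := by
      intro K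
      have hsub : B ⊆ ⋃ (j) (_ : K ≤ j), C (m j) := Set.iInter_subset _ K
      have hset : (⋃ (j) (_ : K ≤ j), C (m j)) = ⋃ i : ℕ, C (m (i + K)) := by
        ext x
        simp only [Set.mem_iUnion]
        constructor
        · rintro ⟨j, hj, hx⟩
          exact ⟨j - K, by rwa [Nat.sub_add_cancel hj]⟩
        · rintro ⟨i, hx⟩
          exact ⟨i + K, Nat.le_add_left K i, hx⟩
      calc p 1 y₀ B ≤ p 1 y₀ (⋃ i : ℕ, C (m (i + K))) := by
            rw [← hset]; exact measure_mono hsub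
        _ ≤ ∑' i : ℕ, p 1 y₀ (C (m (i + K))) := measure_iUnion_le _
        _ ≤ ∑' i : ℕ, ((2 : ℝ≥0∞) ^ (i + K))⁻¹ :=
            ENNReal.tsum_le_tsum fun i => le_of_lt (lt_of_lt_of_le (hy _) (hτle _))
        _ = ∑' i : ℕ, (2 : ℝ≥0∞)⁻¹ ^ i * ((2 : ℝ≥0∞) ^ K)⁻¹ := by
            congr 1
            funext i
            rw [pow_add, ENNReal.mul_inv (by simp) (by simp), ENNReal.inv_pow]
        _ = (∑' i : ℕ, (2 : ℝ≥0∞)⁻¹ ^ i) * ((2 : ℝ≥0∞) ^ K)⁻¹ := ENNReal.tsum_mul_right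
        _ = 2 * ((2 : ℝ≥0∞) ^ K)⁻¹ := by
            rw [ENNReal.tsum_geometric, ENNReal.one_sub_inv_two, inv_inv]
    by_contra hvne
    have hv : 0 < p 1 y₀ B := pos_iff_ne_zero.2 hvne
    have hv2 : p 1 y₀ B / 2 ≠ 0 := by
      simp only [ne_eq, ENNReal.div_eq_zero_iff, not_or]
      exact ⟨hvne, by norm_num⟩
    obtain ⟨K, hK⟩ := ENNReal.exists_inv_two_pow_lt hv2
    have h2k : ((2 : ℝ≥0∞) ^ K)⁻¹ < p 1 y₀ B / 2 := by
      simpa [ENNReal.inv_pow] using hK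
    have : 2 * ((2 : ℝ≥0∞) ^ K)⁻¹ < 2 * (p 1 y₀ B / 2) :=
      (ENNReal.mul_lt_mul_iff_right (by norm_num) (by norm_num)).2 h2k
    rw [ENNReal.mul_div_cancel (by norm_num) (by norm_num)] at this
    exact absurd (lt_of_le_of_lt (hb K) this) (lt_irrefl _)
  -- p 1 z₀ Bᶜ = 0
  have hzB : p 1 z₀ Bᶜ = 0 := by
    have hcompl : Bᶜ = ⋃ K, (⋃ (j) (_ : K ≤ j), C (m j))ᶜ := by
      rw [hBdef, Set.compl_iInter]
    rw [hcompl]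
    apply measure_iUnion_null
    intro K
    have hb : ∀ j, K ≤ j → p 1 z₀ (⋃ (j') (_ : K ≤ j'), C (m j'))ᶜ ≤ ((2 : ℝ≥0∞) ^ j)⁻¹ := by
      intro j hKj
      have hsub : (⋃ (j') (_ : K ≤ j'), C (m j'))ᶜ ⊆ (C (m j))ᶜ := by
        apply Set.compl_subset_compl.2
        intro x hx
        exact Set.mem_iUnion.2 ⟨j, Set.mem_iUnion.2 ⟨hKj, hx⟩⟩
      exact le_trans (measure_mono hsub) (le_of_lt (lt_of_lt_of_le (hz j) (hτle j)))
    by_contra hvne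
    have hv2 : p 1 z₀ (⋃ (j') (_ : K ≤ j'), C (m j'))ᶜ ≠ 0 := hvne
    obtain ⟨n, hn⟩ := ENNReal.exists_inv_two_pow_lt hv2
    have hj := hb (max n K) (le_max_right n K)
    have hmono : ((2 : ℝ≥0∞) ^ (max n K))⁻¹ ≤ ((2 : ℝ≥0∞) ^ n)⁻¹ := by
      rw [ENNReal.inv_le_inv]
      exact pow_le_pow_right₀ (by norm_num) (le_max_left n K)
    rw [← ENNReal.inv_pow] at hn
    exact absurd (lt_of_le_of_lt (le_trans hj hmono) hn) (lt_irrefl _)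
  -- contradiction with equivalence
  have hμB : μ B = 0 := by
    by_contra hne
    exact absurd hyB (hpos B hBm hne y₀).ne'
  have hμBc : μ Bᶜ = 0 := by
    by_contra hne
    exact absurd hzB (hpos Bᶜ hBm.compl hne z₀).ne'
  have : (1 : ℝ≥0∞) ≤ 0 := by
    calc (1 : ℝ≥0∞) = μ univ := measure_univ.symm
      _ ≤ μ B + μ Bᶜ := by
          refine le_trans (measure_mono ?_) (measure_union_le _ _)
          intro x _
          by_cases h : x ∈ B
          · exact Or.inl h
          · exact Or.inr h
      _ = 0 := by rw [hμB, hμBc, add_zero]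
  exact absurd this (by norm_num)

/-- Key convergence estimate: evolved measures with bounded density approach `(σ univ) • μ`. -/
lemma doob_key (p : ℝ → E → Measure E) (μ : Measure E) [IsProbabilityMeasure μ]
    (hprob : ∀ t > (0 : ℝ), ∀ x : E, IsProbabilityMeasure (p t x))
    (hmeas : ∀ t > (0 : ℝ), ∀ A : Set E, MeasurableSet A → Measurable (fun x => p t x A))
    (hCK : ∀ s > (0 : ℝ), ∀ t > (0 : ℝ), ∀ (x : E) (A : Set E), MeasurableSet A →
      p (t + s) x A = ∫⁻ y, p s y A ∂(p t x))
    (hinv : ∀ t > (0 : ℝ), ∀ A : Set E, MeasurableSet A → ∫⁻ x, p t x A ∂μ = μ A)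
    (hpos : ∀ (A : Set E), MeasurableSet A → μ A ≠ 0 → ∀ y : E, 0 < p 1 y A)
    (σ : Measure E) (M : ℝ≥0∞) (hM0 : M ≠ 0) (hMtop : M ≠ ⊤)
    (hσM : σ ≤ M • μ) (hσ1 : σ univ ≤ 1)
    {ε : ℝ≥0∞} (hε : 0 < ε) :
    ∃ s₀ : ℝ, 0 < s₀ ∧ ∀ s, s₀ ≤ s → ∀ A : Set E, MeasurableSet A →
      (σ.bind (p s) A ≤ σ univ * μ A + ε ∧ σ univ * μ A ≤ σ.bind (p s) A + ε) := by
  set c : ℝ≥0∞ := σ univ with hcdef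
  have hc1 : c ≤ 1 := hσ1
  have hctop : c ≠ ⊤ := (lt_of_le_of_lt hc1 ENNReal.one_lt_top).ne
  -- measurability of kernels
  have hm : ∀ s : ℝ, 0 < s → Measurable (p s) := fun s hs =>
    Measure.measurable_of_measurable_coe _ (fun A hA => hmeas s hs A hA)
  -- basic bind facts
  have F1 : ∀ s : ℝ, 0 < s → ∀ (ν : Measure E) (A : Set E), MeasurableSet A →
      ν.bind (p s) A = ∫⁻ y, p s y A ∂ν := fun s hs ν A hA =>
    Measure.bind_apply hA (hm s hs).aemeasurable
  have F2 : ∀ s : ℝ, 0 < s → ∀ ν : Measure E, ν.bind (p s) univ = ν univ := by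
    intro s hs ν
    rw [F1 s hs ν univ MeasurableSet.univ]
    have : ∀ y : E, p s y univ = 1 := fun y => by
      haveI := hprob s hs y; exact measure_univ
    rw [lintegral_congr this, lintegral_one]
  have F3 : ∀ s : ℝ, 0 < s → ∀ ν ν' : Measure E, ν ≤ ν' →
      ν.bind (p s) ≤ ν'.bind (p s) := by
    intro s hs ν ν' hle
    rw [Measure.le_iff]
    intro A hA
    rw [F1 s hs ν A hA, F1 s hs ν' A hA]
    exact lintegral_mono' hle le_rfl
  have F4 : ∀ s : ℝ, 0 < s → ∀ (a : ℝ≥0∞) (ν : Measure E),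
      (a • ν).bind (p s) = a • (ν.bind (p s)) := by
    intro s hs a ν
    ext A hA
    rw [F1 s hs _ A hA, Measure.smul_apply, smul_eq_mul, F1 s hs ν A hA,
      lintegral_smul_measure, smul_eq_mul]
  have F5 : ∀ s : ℝ, 0 < s → ∀ ν ν' : Measure E,
      (ν + ν').bind (p s) = ν.bind (p s) + ν'.bind (p s) := by
    intro s hs ν ν'
    ext A hA
    rw [F1 s hs _ A hA, Measure.add_apply, F1 s hs ν A hA, F1 s hs ν' A hA,
      lintegral_add_measure]
  have F6 : μ.bind (p 1) = μ ∧ ∀ r : ℝ, 0 < r → μ.bind (p r) = μ := by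
    constructor
    · ext A hA
      rw [F1 1 one_pos μ A hA, hinv 1 one_pos A hA]
    · intro r hr
      ext A hA
      rw [F1 r hr μ A hA, hinv r hr A hA]
  have F7 : ∀ s : ℝ, 0 < s → ∀ t : ℝ, 0 < t → ∀ ν : Measure E,
      (ν.bind (p t)).bind (p s) = ν.bind (p (t + s)) := by
    intro s hs t ht ν
    ext A hA
    rw [F1 s hs _ A hA, Measure.lintegral_bind (hm t ht).aemeasurable (hmeas s hs A hA).aemeasurable,
      F1 _ (by linarith : (0:ℝ) < t + s) ν A hA]
    apply lintegral_congr
    intro x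
    exact (hCK s hs t ht x A hA).symm
  -- finiteness
  have hfinS : ∀ s : ℝ, 0 < s → (σ.bind (p s)) univ ≤ 1 := by
    intro s hs; rw [F2 s hs]; exact hσ1
  haveI hfincμ : IsFiniteMeasure (c • μ) := by
    constructor
    rw [Measure.smul_apply, smul_eq_mul, measure_univ, mul_one]
    exact lt_of_le_of_lt hc1 ENNReal.one_lt_top
  -- Hahn decomposition for each time
  have hHahn : ∀ s : ℝ, ∃ H : Set E, MeasurableSet H ∧ (0 < s →
      ((∀ B, MeasurableSet B → B ⊆ H → c * μ B ≤ σ.bind (p s) B) ∧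
       (∀ B, MeasurableSet B → B ⊆ Hᶜ → σ.bind (p s) B ≤ c * μ B))) := by
    intro s
    by_cases hs : 0 < s
    · haveI : IsFiniteMeasure (σ.bind (p s)) := by
        constructor
        exact lt_of_le_of_lt (hfinS s hs) ENNReal.one_lt_top
      obtain ⟨H, hHm, h1', h2'⟩ := hahn_decomposition (μ := σ.bind (p s)) (ν := c • μ)
      refine ⟨H, hHm, fun _ => ⟨?_, ?_⟩⟩
      · intro B hB hBH
        have := h1' B hB hBH
        rwa [Measure.smul_apply, smul_eq_mul] at this
      · intro B hB hBH
        have := h2' B hB hBH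
        rwa [Measure.smul_apply, smul_eq_mul] at this
    · exact ⟨∅, MeasurableSet.empty, fun h => absurd h hs⟩
  choose H hHm hH using hHahn
  -- the deficiency function
  set d : ℝ → ℝ≥0∞ := fun s => σ.bind (p s) (H s) - c * μ (H s) with hddef
  have hcμfin : ∀ B : Set E, c * μ B ≠ ⊤ := by
    intro B
    apply ne_of_lt
    calc c * μ B ≤ 1 * 1 := by
          apply mul_le_mul' hc1
          exact le_trans (measure_mono (subset_univ _)) (le_of_eq measure_univ)
      _ < ⊤ := by norm_num
  have hSfin : ∀ s : ℝ, 0 < s → ∀ B : Set E, σ.bind (p s) B ≠ ⊤ := by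
    intro s hs B
    apply ne_of_lt
    calc σ.bind (p s) B ≤ σ.bind (p s) univ := measure_mono (subset_univ _)
      _ ≤ 1 := hfinS s hs
      _ < ⊤ := by norm_num
  have G1 : ∀ s : ℝ, 0 < s → c * μ (H s) ≤ σ.bind (p s) (H s) := fun s hs =>
    (hH s hs).1 (H s) (hHm s) subset_rfl
  have G2 : ∀ s : ℝ, 0 < s → d s + c * μ (H s) = σ.bind (p s) (H s) := fun s hs =>
    tsub_add_cancel_of_le (G1 s hs)
  have hdfin : ∀ s : ℝ, 0 < s → d s ≤ c := by
    intro s hs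
    have : d s ≤ σ.bind (p s) (H s) := tsub_le_self
    calc d s ≤ σ.bind (p s) (H s) := this
      _ ≤ σ.bind (p s) univ := measure_mono (subset_univ _)
      _ = c := F2 s hs σ
  -- complementary identity : d s + Σs Hᶜ = c μ Hᶜ
  have G2c : ∀ s : ℝ, 0 < s → d s + σ.bind (p s) (H s)ᶜ = c * μ (H s)ᶜ := by
    intro s hs
    have htot : σ.bind (p s) (H s) + σ.bind (p s) (H s)ᶜ = c := by
      rw [measure_add_measure_compl (hHm s), F2 s hs]
    have htotμ : c * μ (H s) + c * μ (H s)ᶜ = c := by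
      rw [← mul_add, measure_add_measure_compl (hHm s), measure_univ, mul_one]
    have : d s + c * μ (H s) + σ.bind (p s) (H s)ᶜ = c * μ (H s) + c * μ (H s)ᶜ := by
      rw [G2 s hs, htot, htotμ]
    rw [add_comm (d s) (c * μ (H s)), add_assoc] at this
    exact (ENNReal.add_right_inj (hcμfin _)).1 this
  -- bounds : Σs A and c μ A within d s of each other
  have G3 : ∀ s : ℝ, 0 < s → ∀ A : Set E, MeasurableSet A →
      (σ.bind (p s) A ≤ c * μ A + d s ∧ c * μ A ≤ σ.bind (p s) A + d s) := by
    intro s hs A hA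
    have hsplitS : σ.bind (p s) A = σ.bind (p s) (A ∩ H s) + σ.bind (p s) (A \ H s) :=
      (measure_inter_add_diff A (hHm s)).symm
    have hsplitμ : c * μ A = c * μ (A ∩ H s) + c * μ (A \ H s) := by
      rw [← mul_add, measure_inter_add_diff A (hHm s)]
    have hAH : MeasurableSet (A ∩ H s) := hA.inter (hHm s)
    have hAHc : MeasurableSet (A \ H s) := hA.diff (hHm s)
    have hsubH : A ∩ H s ⊆ H s := inter_subset_right
    have hsubHc : A \ H s ⊆ (H s)ᶜ := fun x hx => hx.2
    constructor
    · -- Σs (A∩H) ≤ cμ(A∩H) + d s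
      have key : σ.bind (p s) (A ∩ H s) ≤ c * μ (A ∩ H s) + d s := by
        have hsplit2 : σ.bind (p s) (H s) =
            σ.bind (p s) (A ∩ H s) + σ.bind (p s) (H s \ (A ∩ H s)) := by
          rw [add_comm]
          exact (measure_diff_add_inter (H s) hAH).symm.trans (by rw [Set.inter_eq_right.2 hsubH])
        have hsplit2μ : c * μ (H s) = c * μ (A ∩ H s) + c * μ (H s \ (A ∩ H s)) := by
          rw [← mul_add, add_comm (μ (A ∩ H s))]
          congr 1
          exact (measure_diff_add_inter (H s) hAH).symm.trans (by rw [Set.inter_eq_right.2 hsubH])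
        have hHdiff : c * μ (H s \ (A ∩ H s)) ≤ σ.bind (p s) (H s \ (A ∩ H s)) :=
          (hH s hs).1 _ ((hHm s).diff hAH) (diff_subset)
        have : σ.bind (p s) (A ∩ H s) + c * μ (H s \ (A ∩ H s)) ≤
            c * μ (A ∩ H s) + c * μ (H s \ (A ∩ H s)) + d s := by
          calc σ.bind (p s) (A ∩ H s) + c * μ (H s \ (A ∩ H s))
              ≤ σ.bind (p s) (A ∩ H s) + σ.bind (p s) (H s \ (A ∩ H s)) := by
                exact add_le_add_right hHdiff _
            _ = σ.bind (p s) (H s) := hsplit2.symm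
            _ = d s + c * μ (H s) := (G2 s hs).symm
            _ = c * μ (A ∩ H s) + c * μ (H s \ (A ∩ H s)) + d s := by
                rw [hsplit2μ]; ring
        have := (ENNReal.add_le_add_iff_right (hcμfin (H s \ (A ∩ H s)))).1
          (by calc σ.bind (p s) (A ∩ H s) + c * μ (H s \ (A ∩ H s))
                ≤ c * μ (A ∩ H s) + c * μ (H s \ (A ∩ H s)) + d s := this
              _ = c * μ (A ∩ H s) + d s + c * μ (H s \ (A ∩ H s)) := by ring)
        exact this
      calc σ.bind (p s) A = σ.bind (p s) (A ∩ H s) + σ.bind (p s) (A \ H s) := hsplitS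
        _ ≤ (c * μ (A ∩ H s) + d s) + c * μ (A \ H s) := by
            apply add_le_add key
            exact (hH s hs).2 _ hAHc hsubHc
        _ = c * μ A + d s := by rw [hsplitμ]; ring
    · -- cμ(A\H) ≤ Σs(A\H) + d s
      have key : c * μ (A \ H s) ≤ σ.bind (p s) (A \ H s) + d s := by
        have hsplit2 : σ.bind (p s) (H s)ᶜ =
            σ.bind (p s) (A \ H s) + σ.bind (p s) ((H s)ᶜ \ (A \ H s)) := by
          rw [add_comm]
          exact (measure_diff_add_inter ((H s)ᶜ) hAHc).symm.trans
            (by rw [Set.inter_eq_right.2 hsubHc])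
        have hsplit2μ : c * μ (H s)ᶜ = c * μ (A \ H s) + c * μ ((H s)ᶜ \ (A \ H s)) := by
          rw [← mul_add, add_comm (μ (A \ H s))]
          congr 1
          exact (measure_diff_add_inter ((H s)ᶜ) hAHc).symm.trans
            (by rw [Set.inter_eq_right.2 hsubHc])
        have hHdiff : σ.bind (p s) ((H s)ᶜ \ (A \ H s)) ≤ c * μ ((H s)ᶜ \ (A \ H s)) :=
          (hH s hs).2 _ ((hHm s).compl.diff hAHc) (diff_subset)
        have hchain : c * μ (A \ H s) + σ.bind (p s) ((H s)ᶜ \ (A \ H s)) ≤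
            σ.bind (p s) (A \ H s) + d s + σ.bind (p s) ((H s)ᶜ \ (A \ H s)) := by
          calc c * μ (A \ H s) + σ.bind (p s) ((H s)ᶜ \ (A \ H s))
              ≤ c * μ (A \ H s) + c * μ ((H s)ᶜ \ (A \ H s)) := add_le_add_right hHdiff _
            _ = c * μ (H s)ᶜ := hsplit2μ.symm
            _ = d s + σ.bind (p s) (H s)ᶜ := (G2c s hs).symm
            _ = d s + (σ.bind (p s) (A \ H s) + σ.bind (p s) ((H s)ᶜ \ (A \ H s))) := by
                rw [hsplit2]
            _ = σ.bind (p s) (A \ H s) + d s + σ.bind (p s) ((H s)ᶜ \ (A \ H s)) := by ring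
        exact (ENNReal.add_le_add_iff_right (hSfin s hs _)).1 hchain
      calc c * μ A = c * μ (A ∩ H s) + c * μ (A \ H s) := hsplitμ
        _ ≤ σ.bind (p s) (A ∩ H s) + (σ.bind (p s) (A \ H s) + d s) := by
            apply add_le_add _ key
            exact (hH s hs).1 _ hAH hsubH
        _ = σ.bind (p s) A + d s := by rw [hsplitS]; ring
  -- the excess and deficiency measures
  set al : ℝ → Measure E := fun s =>
    (σ.bind (p s)).restrict (H s) - (c • μ).restrict (H s) with haldef
  set be : ℝ → Measure E := fun s =>
    (c • μ).restrict ((H s)ᶜ) - (σ.bind (p s)).restrict ((H s)ᶜ) with hbedef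
  haveI hfinrestr : ∀ s : ℝ, IsFiniteMeasure ((c • μ).restrict (H s)) := by
    intro s
    constructor
    rw [Measure.restrict_apply MeasurableSet.univ, Measure.smul_apply, smul_eq_mul]
    calc c * μ (univ ∩ H s) ≤ 1 * 1 :=
          mul_le_mul' hc1 (le_trans (measure_mono (subset_univ _)) measure_univ.le)
      _ < ⊤ := by norm_num
  -- apply formulas
  have hres_le : ∀ s : ℝ, 0 < s →
      (c • μ).restrict (H s) ≤ (σ.bind (p s)).restrict (H s) := by
    intro s hs
    rw [Measure.le_iff]
    intro B hB
    rw [Measure.restrict_apply hB, Measure.restrict_apply hB, Measure.smul_apply, smul_eq_mul]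
    exact (hH s hs).1 _ (hB.inter (hHm s)) inter_subset_right
  have hres_le' : ∀ s : ℝ, 0 < s →
      (σ.bind (p s)).restrict ((H s)ᶜ) ≤ (c • μ).restrict ((H s)ᶜ) := by
    intro s hs
    rw [Measure.le_iff]
    intro B hB
    rw [Measure.restrict_apply hB, Measure.restrict_apply hB, Measure.smul_apply, smul_eq_mul]
    exact (hH s hs).2 _ (hB.inter (hHm s).compl) inter_subset_right
  have hal_apply : ∀ s : ℝ, 0 < s → ∀ B : Set E, MeasurableSet B →
      al s B = σ.bind (p s) (B ∩ H s) - c * μ (B ∩ H s) := by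
    intro s hs B hB
    rw [haldef]
    rw [Measure.sub_apply hB (hres_le s hs), Measure.restrict_apply hB,
      Measure.restrict_apply hB, Measure.smul_apply, smul_eq_mul]
  have hbe_apply : ∀ s : ℝ, 0 < s → ∀ B : Set E, MeasurableSet B →
      be s B = c * μ (B ∩ (H s)ᶜ) - σ.bind (p s) (B ∩ (H s)ᶜ) := by
    intro s hs B hB
    haveI : IsFiniteMeasure ((σ.bind (p s)).restrict ((H s)ᶜ)) := by
      constructor
      rw [Measure.restrict_apply MeasurableSet.univ]
      exact lt_of_le_of_lt (le_trans (measure_mono (subset_univ _)) (hfinS s hs))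
        ENNReal.one_lt_top
    rw [hbedef]
    rw [Measure.sub_apply hB (hres_le' s hs), Measure.restrict_apply hB,
      Measure.restrict_apply hB, Measure.smul_apply, smul_eq_mul]
  have hal_mass : ∀ s : ℝ, 0 < s → al s univ = d s := by
    intro s hs
    have h := hal_apply s hs univ MeasurableSet.univ
    rw [Set.univ_inter] at h
    rw [h]
  have hbe_mass : ∀ s : ℝ, 0 < s → be s univ = d s := by
    intro s hs
    have h := hbe_apply s hs univ MeasurableSet.univ
    rw [Set.univ_inter] at h
    rw [h]
    have := G2c s hs
    exact ENNReal.sub_eq_of_eq_add (hSfin s hs _) (by rw [← this])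
  have hal_le : ∀ s : ℝ, 0 < s → al s ≤ M • μ := by
    intro s hs
    have h1 : al s ≤ σ.bind (p s) := by
      rw [Measure.le_iff]
      intro B hB
      rw [hal_apply s hs B hB]
      exact le_trans tsub_le_self (measure_mono inter_subset_left)
    have h2 : σ.bind (p s) ≤ M • μ := by
      calc σ.bind (p s) ≤ (M • μ).bind (p s) := F3 s hs _ _ hσM
        _ = M • (μ.bind (p s)) := F4 s hs M μ
        _ = M • μ := by rw [F6.2 s hs]
    exact le_trans h1 h2
  have hbe_le : ∀ s : ℝ, 0 < s → be s ≤ μ := by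
    intro s hs
    rw [Measure.le_iff]
    intro B hB
    rw [hbe_apply s hs B hB]
    calc c * μ (B ∩ (H s)ᶜ) - σ.bind (p s) (B ∩ (H s)ᶜ) ≤ c * μ (B ∩ (H s)ᶜ) := tsub_le_self
      _ ≤ 1 * μ B := mul_le_mul' hc1 (measure_mono inter_subset_left)
      _ = μ B := one_mul _
  -- the measure identity Σs + βs = c•μ + αs
  have hident : ∀ s : ℝ, 0 < s → σ.bind (p s) + be s = c • μ + al s := by
    intro s hs
    ext B hB
    rw [Measure.add_apply, Measure.add_apply, hal_apply s hs B hB, hbe_apply s hs B hB,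
      Measure.smul_apply, smul_eq_mul]
    have hsB : σ.bind (p s) B =
        σ.bind (p s) (B ∩ H s) + σ.bind (p s) (B ∩ (H s)ᶜ) := by
      rw [← measure_inter_add_diff B (hHm s), Set.diff_eq]
    have hmB : c * μ B = c * μ (B ∩ H s) + c * μ (B ∩ (H s)ᶜ) := by
      rw [← mul_add, ← measure_inter_add_diff B (hHm s), Set.diff_eq]
    have hHa : c * μ (B ∩ H s) ≤ σ.bind (p s) (B ∩ H s) :=
      (hH s hs).1 _ (hB.inter (hHm s)) inter_subset_right
    have hHb : σ.bind (p s) (B ∩ (H s)ᶜ) ≤ c * μ (B ∩ (H s)ᶜ) :=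
      (hH s hs).2 _ (hB.inter (hHm s).compl) inter_subset_right
    rw [hsB, hmB, add_assoc, add_tsub_cancel_of_le hHb, add_right_comm,
      add_tsub_cancel_of_le hHa]
  -- evolution identity
  have hevol : ∀ s : ℝ, 0 < s → ∀ r : ℝ, 0 < r →
      σ.bind (p (s + r)) + (be s).bind (p r) = c • μ + (al s).bind (p r) := by
    intro s hs r hr
    calc σ.bind (p (s + r)) + (be s).bind (p r)
        = (σ.bind (p s)).bind (p r) + (be s).bind (p r) := by rw [F7 r hr s hs σ]
      _ = (σ.bind (p s) + be s).bind (p r) := (F5 r hr _ _).symm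
      _ = (c • μ + al s).bind (p r) := by rw [hident s hs]
      _ = (c • μ).bind (p r) + (al s).bind (p r) := F5 r hr _ _
      _ = c • (μ.bind (p r)) + (al s).bind (p r) := by rw [F4 r hr c μ]
      _ = c • μ + (al s).bind (p r) := by rw [F6.2 r hr]
  -- the key decrement identity
  have hstar : ∀ s : ℝ, 0 < s → ∀ r : ℝ, 0 < r →
      d (s + r) + ((al s).bind (p r) ((H (s + r))ᶜ) + (be s).bind (p r) (H (s + r))) = d s := by
    intro s hs r hr
    have hsr : (0:ℝ) < s + r := by linarith
    set B := H (s + r) with hBdef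
    have hBmeas : MeasurableSet B := hHm (s + r)
    have happ : σ.bind (p (s + r)) B + (be s).bind (p r) B =
        c * μ B + (al s).bind (p r) B := by
      have := congrArg (fun ν : Measure E => ν B) (hevol s hs r hr)
      simpa [Measure.add_apply, Measure.smul_apply, smul_eq_mul] using this
    have h2 := G2 (s + r) hsr
    have hkey : d (s + r) + (be s).bind (p r) B = (al s).bind (p r) B := by
      have hc2 : c * μ B + (d (s + r) + (be s).bind (p r) B) =
          c * μ B + (al s).bind (p r) B := by
        calc c * μ B + (d (s + r) + (be s).bind (p r) B)
            = (d (s + r) + c * μ B) + (be s).bind (p r) B := by ring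
          _ = σ.bind (p (s + r)) B + (be s).bind (p r) B := by rw [h2]
          _ = c * μ B + (al s).bind (p r) B := happ
      exact (ENNReal.add_right_inj (hcμfin B)).1 hc2
    calc d (s + r) + ((al s).bind (p r) Bᶜ + (be s).bind (p r) B)
        = (al s).bind (p r) Bᶜ + (d (s + r) + (be s).bind (p r) B) := by ring
      _ = (al s).bind (p r) Bᶜ + (al s).bind (p r) B := by rw [hkey]
      _ = (al s).bind (p r) univ := by
          rw [add_comm]; exact measure_add_measure_compl hBmeas
      _ = al s univ := F2 r hr (al s)
      _ = d s := hal_mass s hs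
  -- monotonicity of d
  have hmono : ∀ s : ℝ, 0 < s → ∀ r : ℝ, s ≤ r → d r ≤ d s := by
    intro s hs r hsr
    rcases eq_or_lt_of_le hsr with h | h
    · rw [h]
    · have hr : (0:ℝ) < r - s := by linarith
      have := hstar s hs (r - s) hr
      have hrr : s + (r - s) = r := by ring
      rw [hrr] at this
      calc d r ≤ d r + ((al s).bind (p (r - s)) ((H r)ᶜ) + (be s).bind (p (r - s)) (H r)) :=
            le_self_add
        _ = d s := this
  -- the contradiction lemma: d cannot stay above a positive level
  have hinf : ∀ δ : ℝ≥0∞, 0 < δ → (∀ s : ℝ, 0 < s → δ ≤ d s) → False := by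
    intro δ hδ hδd
    have hδ1 : δ ≤ 1 := le_trans (hδd 1 one_pos) (le_trans (hdfin 1 one_pos) hc1)
    have hδtop : δ ≠ ⊤ := (lt_of_le_of_lt hδ1 ENNReal.one_lt_top).ne
    have hδ2top : δ / 2 ≠ ⊤ := by
      intro h
      exact hδtop (by simpa using ENNReal.div_eq_top.1 h |>.elim (fun ⟨_, h2⟩ => absurd h2 (by norm_num)) (fun ⟨h1, _⟩ => h1) ▸ rfl)
    have hδ2pos : (0:ℝ≥0∞) < δ / 2 := ENNReal.div_pos hδ.ne' (by norm_num)
    have hθ1 : (0:ℝ≥0∞) < (δ / 2) / M := ENNReal.div_pos hδ2pos.ne' hMtop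
    obtain ⟨τ₀, hτ₀, hR⟩ := doob_lemmaR p μ hprob hmeas hpos ((δ / 2) / M) (δ / 2) hθ1 hδ2pos
    set τ : ℝ≥0∞ := min τ₀ 1 with hτdef
    have hτpos : 0 < τ := lt_min hτ₀ (by norm_num)
    have hτ1 : τ ≤ 1 := min_le_right _ _
    have hτtop : τ ≠ ⊤ := (lt_of_le_of_lt hτ1 ENNReal.one_lt_top).ne
    have hRτ : ∀ C : Set E, MeasurableSet C →
        μ {y | p 1 y C < τ} < (δ / 2) / M ∨ μ {y | p 1 y Cᶜ < τ} < δ / 2 := by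
      intro C hC
      rcases hR C hC with h | h
      · have hsub : {y : E | p 1 y C < τ} ⊆ {y : E | p 1 y C < τ₀} :=
          fun y hy => by
            simp only [Set.mem_setOf_eq] at hy ⊢
            exact lt_of_lt_of_le hy (min_le_left _ _)
        exact Or.inl (lt_of_le_of_lt (measure_mono hsub) h)
      · have hsub : {y : E | p 1 y Cᶜ < τ} ⊆ {y : E | p 1 y Cᶜ < τ₀} :=
          fun y hy => by
            simp only [Set.mem_setOf_eq] at hy ⊢
            exact lt_of_lt_of_le hy (min_le_left _ _)
        exact Or.inr (lt_of_le_of_lt (measure_mono hsub) h)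
    set γ : ℝ≥0∞ := τ * (δ / 2) with hγdef
    have hγpos : 0 < γ := ENNReal.mul_pos hτpos.ne' hδ2pos.ne'
    have hγtop : γ ≠ ⊤ := ENNReal.mul_ne_top hτtop hδ2top
    -- coupling bound
    have hcoup : ∀ ξ ζ : Measure E, ξ ≤ M • μ → ζ ≤ μ → δ ≤ ξ univ → δ ≤ ζ univ →
        ∀ C : Set E, MeasurableSet C → γ ≤ ξ.bind (p 1) C + ζ.bind (p 1) Cᶜ := by
      intro ξ ζ hξM hζμ hξm hζm C hC
      by_contra hlt
      push_neg at hlt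
      have hu : Measurable (fun y => p 1 y C) := hmeas 1 one_pos C hC
      have hv : Measurable (fun y => p 1 y Cᶜ) := hmeas 1 one_pos Cᶜ hC.compl
      have huset : MeasurableSet {y : E | p 1 y C < τ} := measurableSet_lt hu measurable_const
      have hvset : MeasurableSet {y : E | p 1 y Cᶜ < τ} := measurableSet_lt hv measurable_const
      -- ξ side
      have h1 : ∫⁻ y, p 1 y C ∂ξ < γ := by
        rw [← F1 1 one_pos ξ C hC]
        exact lt_of_le_of_lt le_self_add hlt
      have hmark1 : τ * ξ {y | τ ≤ p 1 y C} ≤ ∫⁻ y, p 1 y C ∂ξ :=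
        mul_meas_ge_le_lintegral₀ hu.aemeasurable τ
      have hsmall1 : ξ {y | τ ≤ p 1 y C} < δ / 2 := by
        have := lt_of_le_of_lt hmark1 h1
        rw [hγdef] at this
        exact (ENNReal.mul_lt_mul_iff_right hτpos.ne' hτtop).1 this
      have hsplit1 : ξ {y | p 1 y C < τ} + ξ {y | τ ≤ p 1 y C} = ξ univ := by
        have hcompl : {y : E | τ ≤ p 1 y C} = {y : E | p 1 y C < τ}ᶜ := by
          ext y; simp [not_lt]
        rw [hcompl]
        exact measure_add_measure_compl huset
      have hbig1 : δ / 2 ≤ ξ {y | p 1 y C < τ} := by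
        have hδle : δ / 2 + δ / 2 ≤ ξ {y | p 1 y C < τ} + δ / 2 := by
          rw [ENNReal.add_halves]
          calc δ ≤ ξ univ := hξm
            _ = ξ {y | p 1 y C < τ} + ξ {y | τ ≤ p 1 y C} := hsplit1.symm
            _ ≤ ξ {y | p 1 y C < τ} + δ / 2 := add_le_add_right hsmall1.le _
        exact (ENNReal.add_le_add_iff_right hδ2top).1 hδle
      have hμ1 : (δ / 2) / M ≤ μ {y | p 1 y C < τ} := by
        have hle : δ / 2 ≤ M * μ {y | p 1 y C < τ} := by
          refine le_trans hbig1 ?_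
          have := Measure.le_iff.1 hξM {y | p 1 y C < τ} huset
          simpa [Measure.smul_apply, smul_eq_mul] using this
        rw [ENNReal.div_le_iff_le_mul (Or.inl hM0) (Or.inl hMtop)]
        rw [mul_comm] at hle
        exact hle
      -- ζ side
      have h2 : ∫⁻ y, p 1 y Cᶜ ∂ζ < γ := by
        rw [← F1 1 one_pos ζ Cᶜ hC.compl]
        exact lt_of_le_of_lt le_add_self hlt
      have hmark2 : τ * ζ {y | τ ≤ p 1 y Cᶜ} ≤ ∫⁻ y, p 1 y Cᶜ ∂ζ :=
        mul_meas_ge_le_lintegral₀ hv.aemeasurable τ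
      have hsmall2 : ζ {y | τ ≤ p 1 y Cᶜ} < δ / 2 := by
        have := lt_of_le_of_lt hmark2 h2
        rw [hγdef] at this
        exact (ENNReal.mul_lt_mul_iff_right hτpos.ne' hτtop).1 this
      have hsplit2 : ζ {y | p 1 y Cᶜ < τ} + ζ {y | τ ≤ p 1 y Cᶜ} = ζ univ := by
        have hcompl : {y : E | τ ≤ p 1 y Cᶜ} = {y : E | p 1 y Cᶜ < τ}ᶜ := by
          ext y; simp [not_lt]
        rw [hcompl]
        exact measure_add_measure_compl hvset
      have hbig2 : δ / 2 ≤ ζ {y | p 1 y Cᶜ < τ} := by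
        have hδle : δ / 2 + δ / 2 ≤ ζ {y | p 1 y Cᶜ < τ} + δ / 2 := by
          rw [ENNReal.add_halves]
          calc δ ≤ ζ univ := hζm
            _ = ζ {y | p 1 y Cᶜ < τ} + ζ {y | τ ≤ p 1 y Cᶜ} := hsplit2.symm
            _ ≤ ζ {y | p 1 y Cᶜ < τ} + δ / 2 := add_le_add_right hsmall2.le _
        exact (ENNReal.add_le_add_iff_right hδ2top).1 hδle
      have hμ2 : δ / 2 ≤ μ {y | p 1 y Cᶜ < τ} :=
        le_trans hbig2 (Measure.le_iff.1 hζμ _ hvset)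
      rcases hRτ C hC with h | h
      · exact absurd hμ1 (not_le.2 h)
      · exact absurd hμ2 (not_le.2 h)
    -- one-step decrement
    have hstep : ∀ s : ℝ, 0 < s → d (s + 2) + γ ≤ d s := by
      intro s hs
      have h2pos : (0:ℝ) < 2 := by norm_num
      have hstar2 := hstar s hs 2 h2pos
      set B := H (s + 2) with hB2def
      have h11 : (1:ℝ) + 1 = 2 := by norm_num
      have hcompal : ((al s).bind (p 1)).bind (p 1) = (al s).bind (p 2) := by
        rw [F7 1 one_pos 1 one_pos (al s), h11]
      have hcompbe : ((be s).bind (p 1)).bind (p 1) = (be s).bind (p 2) := by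
        rw [F7 1 one_pos 1 one_pos (be s), h11]
      have hξM : (al s).bind (p 1) ≤ M • μ := by
        calc (al s).bind (p 1) ≤ (M • μ).bind (p 1) := F3 1 one_pos _ _ (hal_le s hs)
          _ = M • (μ.bind (p 1)) := F4 1 one_pos M μ
          _ = M • μ := by rw [F6.1]
      have hζμ : (be s).bind (p 1) ≤ μ := by
        calc (be s).bind (p 1) ≤ μ.bind (p 1) := F3 1 one_pos _ _ (hbe_le s hs)
          _ = μ := F6.1
      have hξm : δ ≤ ((al s).bind (p 1)) univ := by
        rw [F2 1 one_pos, hal_mass s hs]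
        exact hδd s hs
      have hζm : δ ≤ ((be s).bind (p 1)) univ := by
        rw [F2 1 one_pos, hbe_mass s hs]
        exact hδd s hs
      have hcb := hcoup _ _ hξM hζμ hξm hζm Bᶜ (hHm (s + 2)).compl
      rw [hcompal, hcompbe, compl_compl] at hcb
      calc d (s + 2) + γ
          ≤ d (s + 2) + ((al s).bind (p 2) Bᶜ + (be s).bind (p 2) B) :=
            add_le_add_right hcb _
        _ = d s := hstar2
    -- iterate the decrement
    have hiter : ∀ n : ℕ, d (1 + 2 * (n:ℝ)) + (n : ℝ≥0∞) * γ ≤ d 1 := by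
      intro n
      induction n with
      | zero => simp
      | succ k ih =>
        have hkpos : (0:ℝ) < 1 + 2 * (k:ℝ) := by positivity
        have hstepk := hstep (1 + 2 * (k:ℝ)) hkpos
        have harr : (1:ℝ) + 2 * ((k:ℝ) + 1) = (1 + 2 * (k:ℝ)) + 2 := by ring
        calc d (1 + 2 * ((k+1 : ℕ):ℝ)) + ((k+1 : ℕ) : ℝ≥0∞) * γ
            = (d ((1 + 2 * (k:ℝ)) + 2) + γ) + (k : ℝ≥0∞) * γ := by
              push_cast
              rw [harr]
              ring
          _ ≤ d (1 + 2 * (k:ℝ)) + (k : ℝ≥0∞) * γ := add_le_add_left hstepk _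
          _ ≤ d 1 := ih
    have hbound : ∀ n : ℕ, (n : ℝ≥0∞) * γ ≤ 1 := by
      intro n
      calc (n : ℝ≥0∞) * γ ≤ d (1 + 2 * (n:ℝ)) + (n : ℝ≥0∞) * γ := le_add_self
        _ ≤ d 1 := hiter n
        _ ≤ c := hdfin 1 one_pos
        _ ≤ 1 := hc1
    obtain ⟨n, hn⟩ := ENNReal.exists_nat_gt (ENNReal.inv_ne_top.2 hγpos.ne')
    have h1lt : (1:ℝ≥0∞) < (n : ℝ≥0∞) * γ := by
      have := (ENNReal.mul_lt_mul_iff_left hγpos.ne' hγtop).2 hn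
      rwa [ENNReal.inv_mul_cancel hγpos.ne' hγtop] at this
    exact absurd (hbound n) (not_le.2 h1lt)
  -- conclusion
  set εd : ℝ≥0∞ := min ε 1 with hεddef
  have hεdpos : 0 < εd := lt_min hε (by norm_num)
  have hex : ∃ s : ℝ, 0 < s ∧ d s < εd := by
    by_contra hno
    push_neg at hno
    exact hinf εd hεdpos (fun s hs => hno s hs)
  obtain ⟨s₀, hs₀, hds₀⟩ := hex
  refine ⟨s₀, hs₀, fun s hss A hA => ?_⟩
  have hspos : 0 < s := lt_of_lt_of_le hs₀ hss
  have hdle : d s ≤ ε := le_trans (hmono s₀ hs₀ s hss)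
    (le_trans hds₀.le (min_le_left _ _))
  exact ⟨le_trans (G3 s hspos A hA).1 (add_le_add_right hdle _),
    le_trans (G3 s hspos A hA).2 (add_le_add_right hdle _)⟩


end DoobAux


/-- If a Markov semigroup of probability transition kernels on a Hausdorff space
(with its Borel σ-algebra) is irreducible and strong Feller, and `μ` is an invariant
probability measure for it, then `μ` is equivalent to each `p t x` (for `t > 0`),
and `p t x A → μ A` as `t → ∞` for every Borel set `A`. -/
theorem invariant_measure_equivalent_and_ergodic
    {E : Type*} [TopologicalSpace E] [T2Space E] [MeasurableSpace E] [BorelSpace E]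
    (p : ℝ → E → Measure E)
    -- each `p t x` is a probability measure
    (hprob : ∀ t > (0 : ℝ), ∀ x : E, IsProbabilityMeasure (p t x))
    -- measurability in the space variable
    (hmeas : ∀ t > (0 : ℝ), ∀ A : Set E, MeasurableSet A →
      Measurable (fun x => p t x A))
    -- Chapman–Kolmogorov identity
    (hCK : ∀ s > (0 : ℝ), ∀ t > (0 : ℝ), ∀ (x : E) (A : Set E), MeasurableSet A →
      p (t + s) x A = ∫⁻ y, p s y A ∂(p t x))
    -- irreducibility
    (hirr : ∀ t > (0 : ℝ), ∀ x : E, ∀ U : Set E, IsOpen U → U.Nonempty →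
      0 < p t x U)
    -- strong Feller property
    (hSF : ∀ t > (0 : ℝ), ∀ A : Set E, MeasurableSet A →
      Continuous (fun x => p t x A))
    -- `μ` is an invariant probability measure
    (μ : Measure E) (hμprob : IsProbabilityMeasure μ)
    (hinv : ∀ t > (0 : ℝ), ∀ A : Set E, MeasurableSet A →
      ∫⁻ x, p t x A ∂μ = μ A) :
    (∀ t > (0 : ℝ), ∀ x : E, μ ≪ p t x ∧ p t x ≪ μ) ∧
    (∀ x : E, ∀ A : Set E, MeasurableSet A →
      Tendsto (fun t => p t x A) atTop (nhds (μ A))) := by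
  haveI := hμprob
  have part1 : ∀ t > (0 : ℝ), ∀ x : E, μ ≪ p t x ∧ p t x ≪ μ := by
    intro t ht x
    constructor
    · refine Measure.AbsolutelyContinuous.mk (fun S hS h0 => ?_)
      by_contra hne
      exact absurd h0
        (doob_pos p μ hprob hmeas hCK hirr hSF hinv ht hS hne x).ne'
    · refine Measure.AbsolutelyContinuous.mk (fun S hS h0 => ?_)
      exact doob_null p μ hprob hmeas hCK hirr hSF hinv ht hS h0 x
  refine ⟨part1, ?_⟩
  intro x A hA
  have hpos1 : ∀ (B : Set E), MeasurableSet B → μ B ≠ 0 → ∀ y : E, 0 < p 1 y B :=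
    fun B hB h y => doob_pos p μ hprob hmeas hCK hirr hSF hinv one_pos hB h y
  haveI hx1 : IsProbabilityMeasure (p 1 x) := hprob 1 one_pos x
  have hac : p 1 x ≪ μ := (part1 1 one_pos x).2
  set g : E → ℝ≥0∞ := (p 1 x).rnDeriv μ with hgdef
  have hgm : Measurable g := Measure.measurable_rnDeriv _ _
  have hwd : μ.withDensity g = p 1 x := Measure.withDensity_rnDeriv_eq _ _ hac
  rw [ENNReal.tendsto_nhds (measure_ne_top μ A)]
  intro ε hε
  set ε₁ : ℝ≥0∞ := (min ε 1) / 2 with hε₁def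
  have hεmin : 0 < min ε 1 := lt_min hε (by norm_num)
  have hε₁pos : 0 < ε₁ := ENNReal.div_pos hεmin.ne' (by norm_num)
  have hsum : ε₁ + ε₁ ≤ ε := by
    rw [hε₁def, ENNReal.add_halves]
    exact min_le_left _ _
  -- truncation of density
  set S : ℕ → Set E := fun n => {y : E | (n : ℝ≥0∞) < g y} with hSdef
  have hSm : ∀ n, MeasurableSet (S n) := fun n => measurableSet_lt measurable_const hgm
  have hSanti : Antitone S := by
    intro n m hnm y hy
    simp only [hSdef, mem_setOf_eq] at hy ⊢
    exact lt_of_le_of_lt (by exact_mod_cast Nat.cast_le.2 hnm) hy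
  have hSInter : (⋂ n, S n) = {y : E | g y = ⊤} := by
    ext y
    simp only [mem_iInter, hSdef, mem_setOf_eq]
    constructor
    · intro h
      by_contra hne
      obtain ⟨n, hn⟩ := ENNReal.exists_nat_gt hne
      exact absurd (h n) (not_lt.2 hn.le)
    · intro h n
      rw [h]
      exact ENNReal.natCast_lt_top n
  have hμgtop : μ {y : E | g y = ⊤} = 0 := by
    have := Measure.rnDeriv_lt_top (p 1 x) μ
    rw [ae_iff] at this
    have hset : {y : E | ¬ (p 1 x).rnDeriv μ y < ⊤} = {y : E | g y = ⊤} := by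
      ext y
      simp [hgdef, not_lt, top_le_iff]
    rwa [hset] at this
  have hνtop : p 1 x {y : E | g y = ⊤} = 0 := hac hμgtop
  have htends : Tendsto (fun n => p 1 x (S n)) atTop (nhds 0) := by
    have := tendsto_measure_iInter_atTop (μ := p 1 x)
      (fun n => (hSm n).nullMeasurableSet) hSanti ⟨0, (measure_lt_top _ _).ne⟩
    rw [hSInter, hνtop] at this
    exact this
  obtain ⟨n₀, hn₀⟩ := (htends.eventually_lt_const hε₁pos).exists
  -- split p 1 x into a bounded-density part and a small part
  set T : Set E := {y : E | g y ≤ (n₀ : ℝ≥0∞)} with hTdef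
  have hTm : MeasurableSet T := measurableSet_le hgm measurable_const
  have hTc : Tᶜ = S n₀ := by
    ext y
    simp [hTdef, hSdef, not_le]
  set σ : Measure E := μ.withDensity (T.indicator g) with hσdef
  set ρ : Measure E := μ.withDensity (Tᶜ.indicator g) with hρdef
  have hσρ : σ + ρ = p 1 x := by
    rw [hσdef, hρdef, ← withDensity_add_left (hgm.indicator hTm),
      Set.indicator_self_add_compl T g, hwd]
  set M : ℝ≥0∞ := (n₀ : ℝ≥0∞) + 1 with hMdef
  have hM0 : M ≠ 0 := by simp [hMdef]
  have hMtop : M ≠ ⊤ := by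
    simp [hMdef, ENNReal.add_eq_top, (ENNReal.natCast_lt_top n₀).ne]
  have hσM : σ ≤ M • μ := by
    rw [Measure.le_iff]
    intro B hB
    rw [hσdef, withDensity_apply _ hB, Measure.smul_apply, smul_eq_mul]
    calc ∫⁻ y in B, T.indicator g y ∂μ ≤ ∫⁻ _ in B, M ∂μ := by
          apply setLIntegral_mono' hB
          intro y _
          by_cases hy : y ∈ T
          · rw [Set.indicator_of_mem hy]
            exact le_trans hy (by rw [hMdef]; exact le_self_add)
          · rw [Set.indicator_of_notMem hy]
            exact zero_le
      _ = M * μ B := setLIntegral_const B M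
  have hσ1 : σ univ ≤ 1 := by
    calc σ univ ≤ σ univ + ρ univ := le_self_add
      _ = (σ + ρ) univ := (Measure.add_apply _ _ _).symm
      _ = p 1 x univ := by rw [hσρ]
      _ = 1 := measure_univ
  have hρsmall : ρ univ ≤ ε₁ := by
    have : ρ univ = p 1 x Tᶜ := by
      rw [hρdef, ← hwd, withDensity_apply _ MeasurableSet.univ, Measure.restrict_univ,
        withDensity_apply _ hTm.compl]
      exact lintegral_indicator hTm.compl g
    rw [this, hTc]
    exact hn₀.le
  set c : ℝ≥0∞ := σ univ with hcdef
  have hc1 : c ≤ 1 := hσ1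
  have hclow : 1 ≤ c + ε₁ := by
    calc (1:ℝ≥0∞) = p 1 x univ := measure_univ.symm
      _ = σ univ + ρ univ := by rw [← hσρ]; exact Measure.add_apply _ _ _
      _ ≤ c + ε₁ := add_le_add_right hρsmall _
  obtain ⟨s₀, hs₀pos, hkey⟩ :=
    doob_key p μ hprob hmeas hCK hinv hpos1 σ M hM0 hMtop hσM hσ1 hε₁pos
  refine Filter.eventually_atTop.2 ⟨1 + s₀, fun t ht => ?_⟩
  have hs : s₀ ≤ t - 1 := by linarith
  have hspos : 0 < t - 1 := lt_of_lt_of_le hs₀pos hs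
  have hm' : Measurable (p (t-1)) :=
    Measure.measurable_of_measurable_coe _ (fun B hB => hmeas (t-1) hspos B hB)
  have hbind : p t x A = σ.bind (p (t-1)) A + ρ.bind (p (t-1)) A := by
    have h1 : p t x A = ∫⁻ y, p (t-1) y A ∂(p 1 x) := by
      have := hCK (t-1) hspos 1 one_pos x A hA
      rwa [show (1:ℝ) + (t-1) = t by ring] at this
    rw [h1, ← hσρ, lintegral_add_measure, Measure.bind_apply hA hm'.aemeasurable, Measure.bind_apply hA hm'.aemeasurable]
  have hρbind : ρ.bind (p (t-1)) A ≤ ε₁ := by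
    calc ρ.bind (p (t-1)) A ≤ ρ.bind (p (t-1)) univ := measure_mono (subset_univ _)
      _ = ρ univ := by
          rw [Measure.bind_apply MeasurableSet.univ hm'.aemeasurable]
          have : ∀ y : E, p (t-1) y univ = 1 := fun y => by
            haveI := hprob (t-1) hspos y; exact measure_univ
          rw [lintegral_congr this, lintegral_one]
      _ ≤ ε₁ := hρsmall
  obtain ⟨hup, hlow⟩ := hkey (t-1) hs A hA
  have hupper : p t x A ≤ μ A + ε := by
    calc p t x A = σ.bind (p (t-1)) A + ρ.bind (p (t-1)) A := hbind
      _ ≤ (c * μ A + ε₁) + ε₁ := add_le_add hup hρbind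
      _ ≤ (μ A + ε₁) + ε₁ := by
          apply add_le_add_left (add_le_add_left _ _)
          calc c * μ A ≤ 1 * μ A := mul_le_mul_left hc1 _
            _ = μ A := one_mul _
      _ = μ A + (ε₁ + ε₁) := by ring
      _ ≤ μ A + ε := add_le_add_right hsum _
  have hlower : μ A ≤ p t x A + ε := by
    calc μ A = 1 * μ A := (one_mul _).symm
      _ ≤ (c + ε₁) * μ A := mul_le_mul_left hclow _
      _ = c * μ A + ε₁ * μ A := by ring
      _ ≤ c * μ A + ε₁ := by
          apply add_le_add_right
          calc ε₁ * μ A ≤ ε₁ * 1 := mul_le_mul_right (le_trans (measure_mono (subset_univ _)) measure_univ.le) _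
            _ = ε₁ := mul_one _
      _ ≤ (σ.bind (p (t-1)) A + ε₁) + ε₁ := add_le_add_left hlow _
      _ ≤ (p t x A + ε₁) + ε₁ := by
          apply add_le_add_left (add_le_add_left _ _)
          rw [hbind]
          exact le_self_add
      _ = p t x A + (ε₁ + ε₁) := by ring
      _ ≤ p t x A + ε := add_le_add_right hsum _
  exact Set.mem_Icc.2 ⟨tsub_le_iff_right.2 hlower, hupper⟩
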